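/- Let τ1, τ2 : [0,1] → [0,1] be Borel measurable maps and let f1, f2 be densities such that the measure f1·λ_Leb is invariant under τ1 and f2·λ_Leb is invariant under τ2 (i.e. (f_k·λ_Leb)(τ_k⁻¹(A)) = (f_k·λ_Leb)(A) for every Borel set A). Let c ∈ (0,1), set f = c·f1 + (1−c)·f2, and define p : [0,1] → [0,1] by p(x) = c·f1(x)/f(x) when f(x) > 0 and p(x) = 0 when f(x) = 0. Then the density f is invariant under the position-dependent random map R = {τ1, τ2; p, 1−p}. -/

import Mathlib

open MeasureTheory Set Filter
open scoped ENNReal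

/-- Lebesgue measure restricted to the unit interval `[0,1]`. -/
noncomputable def leb01 : Measure ℝ := volume.restrict (Set.Icc (0:ℝ) 1)

/-- The measure `f · λ_Leb` with density `f` with respect to Lebesgue measure on `[0,1]`. -/
noncomputable def densMeasure (f : ℝ → ℝ) : Measure ℝ :=
  leb01.withDensity (fun x => ENNReal.ofReal (f x))

/-- `f` is a probability density on `[0,1]`. -/
def IsDensity (f : ℝ → ℝ) : Prop :=
  Measurable f ∧ (∀ x, 0 ≤ f x) ∧ (∫ x in Set.Icc (0:ℝ) 1, f x = 1)

/-- Invariance of a measure `μ` under the position dependent random map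
`R = {τ1, τ2; p, 1-p}`. -/
def RMInvariant (τ1 τ2 p : ℝ → ℝ) (μ : Measure ℝ) : Prop :=
  ∀ A : Set ℝ, MeasurableSet A →
    μ A = ∫⁻ x, (ENNReal.ofReal (p x) * A.indicator (fun _ => (1:ℝ≥0∞)) (τ1 x)
      + ENNReal.ofReal (1 - p x) * A.indicator (fun _ => (1:ℝ≥0∞)) (τ2 x)) ∂μ

/-- If `f₁` is an invariant density of `τ1` and `f₂` an invariant density of
`τ2`, then for `c ∈ (0,1)` the convex combination `f = c f₁ + (1-c) f₂` is an invariant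
density of the position dependent random map `R = {τ1, τ2; p, 1-p}` with
`p = c f₁ / f` (set to `0` where `f = 0`). -/
theorem convex_combination_invariant_for_random_map
    (τ1 τ2 : ℝ → ℝ) (hτ1 : Measurable τ1) (hτ2 : Measurable τ2)
    (hτ1m : MapsTo τ1 (Set.Icc (0:ℝ) 1) (Set.Icc (0:ℝ) 1))
    (hτ2m : MapsTo τ2 (Set.Icc (0:ℝ) 1) (Set.Icc (0:ℝ) 1))
    (f1 f2 : ℝ → ℝ) (hf1 : IsDensity f1) (hf2 : IsDensity f2)
    (hinv1 : ∀ A : Set ℝ, MeasurableSet A → densMeasure f1 (τ1 ⁻¹' A) = densMeasure f1 A)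
    (hinv2 : ∀ A : Set ℝ, MeasurableSet A → densMeasure f2 (τ2 ⁻¹' A) = densMeasure f2 A)
    (c : ℝ) (hc : c ∈ Set.Ioo (0:ℝ) 1)
    (f : ℝ → ℝ) (hf : f = fun x => c * f1 x + (1 - c) * f2 x)
    (p : ℝ → ℝ) (hp : p = fun x => if 0 < f x then c * f1 x / f x else 0) :
    RMInvariant τ1 τ2 p (densMeasure f) := by
  obtain ⟨hm1, hn1, -⟩ := hf1
  obtain ⟨hm2, hn2, -⟩ := hf2
  obtain ⟨hc0, hc1⟩ := hc
  have hc1' : (0:ℝ) ≤ 1 - c := by linarith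
  subst hf
  subst hp
  set f : ℝ → ℝ := fun x => c * f1 x + (1 - c) * f2 x with hfdef
  set p : ℝ → ℝ := fun x => if 0 < f x then c * f1 x / f x else 0 with hpdef
  have hfm : Measurable f := (hm1.const_mul c).add (hm2.const_mul (1-c))
  have hfn : ∀ x, 0 ≤ f x := fun x =>
    add_nonneg (mul_nonneg hc0.le (hn1 x)) (mul_nonneg hc1' (hn2 x))
  have hzero : ∀ x, f x = 0 → f1 x = 0 ∧ f2 x = 0 := by
    intro x hx
    simp only [hfdef] at hx
    constructor <;> nlinarith [hn1 x, hn2 x]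
  have hpm : Measurable p := Measurable.ite (measurableSet_lt measurable_const hfm)
      ((hm1.const_mul c).div hfm) measurable_const
  have hkey1 : ∀ x, ENNReal.ofReal (f x) * ENNReal.ofReal (p x)
      = ENNReal.ofReal (c * f1 x) := by
    intro x
    by_cases hx : 0 < f x
    · simp only [hpdef, if_pos hx]
      rw [← ENNReal.ofReal_mul (hfn x)]
      congr 1
      field_simp
    · have h0 : f x = 0 := le_antisymm (not_lt.1 hx) (hfn x)
      rw [h0, (hzero x h0).1]
      simp
  have hkey2 : ∀ x, ENNReal.ofReal (f x) * ENNReal.ofReal (1 - p x)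
      = ENNReal.ofReal ((1-c) * f2 x) := by
    intro x
    by_cases hx : 0 < f x
    · simp only [hpdef, if_pos hx]
      rw [← ENNReal.ofReal_mul (hfn x)]
      congr 1
      have hf2x : (1-c) * f2 x = f x - c * f1 x := by simp only [hfdef]; ring
      rw [hf2x]
      field_simp
    · have h0 : f x = 0 := le_antisymm (not_lt.1 hx) (hfn x)
      rw [h0, (hzero x h0).2]
      simp only [hpdef, hx, if_neg, mul_zero]
      simp [if_neg hx]
  -- auxiliary: densMeasure of scaled density on a measurable set
  have hsmul : ∀ (d : ℝ), 0 ≤ d → ∀ (g : ℝ → ℝ), Measurable g → ∀ (S : Set ℝ),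
      MeasurableSet S →
      densMeasure (fun x => d * g x) S = ENNReal.ofReal d * densMeasure g S := by
    intro d hd g hg S hS
    rw [densMeasure, densMeasure, withDensity_apply _ hS, withDensity_apply _ hS,
      ← lintegral_const_mul _ hg.ennreal_ofReal]
    exact lintegral_congr fun x => ENNReal.ofReal_mul hd
  intro A hA
  have hg1 : Measurable (fun x => A.indicator (fun _ => (1:ℝ≥0∞)) (τ1 x)) :=
    (measurable_const.indicator hA).comp hτ1
  have hg2 : Measurable (fun x => A.indicator (fun _ => (1:ℝ≥0∞)) (τ2 x)) :=
    (measurable_const.indicator hA).comp hτ2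
  have haux : ∀ (τ : ℝ → ℝ), Measurable τ → ∀ (g : ℝ → ℝ),
      ∫⁻ x, ENNReal.ofReal (g x) * A.indicator (fun _ => (1:ℝ≥0∞)) (τ x) ∂leb01
      = densMeasure g (τ ⁻¹' A) := by
    intro τ hτ g
    rw [densMeasure, withDensity_apply _ (hτ hA), ← lintegral_indicator (hτ hA) _]
    refine lintegral_congr fun x => ?_
    by_cases hx : x ∈ τ ⁻¹' A
    · rw [Set.indicator_of_mem hx, Set.indicator_of_mem (show τ x ∈ A from hx), mul_one]
    · rw [Set.indicator_of_notMem hx,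
        Set.indicator_of_notMem (show τ x ∉ A from hx), mul_zero]
  have hInt : Measurable (fun x => ENNReal.ofReal (p x) * A.indicator (fun _ => (1:ℝ≥0∞)) (τ1 x)
      + ENNReal.ofReal (1 - p x) * A.indicator (fun _ => (1:ℝ≥0∞)) (τ2 x)) :=
    (hpm.ennreal_ofReal.mul hg1).add ((measurable_const.sub hpm).ennreal_ofReal.mul hg2)
  have hwd : densMeasure f = leb01.withDensity (fun x => ENNReal.ofReal (f x)) := rfl
  conv_rhs => rw [hwd]
  rw [lintegral_withDensity_eq_lintegral_mul _ hfm.ennreal_ofReal hInt]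
  have hstep : ∫⁻ x, ((fun x => ENNReal.ofReal (f x)) *
        (fun x => ENNReal.ofReal (p x) * A.indicator (fun _ => (1:ℝ≥0∞)) (τ1 x)
          + ENNReal.ofReal (1 - p x) * A.indicator (fun _ => (1:ℝ≥0∞)) (τ2 x))) x ∂leb01
      = ∫⁻ x, (ENNReal.ofReal (c * f1 x) * A.indicator (fun _ => (1:ℝ≥0∞)) (τ1 x)
          + ENNReal.ofReal ((1-c) * f2 x) * A.indicator (fun _ => (1:ℝ≥0∞)) (τ2 x)) ∂leb01 := by
    refine lintegral_congr fun x => ?_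
    simp only [Pi.mul_apply]
    rw [mul_add, ← mul_assoc, ← mul_assoc, hkey1 x, hkey2 x]
  rw [hstep, lintegral_add_left (show Measurable (fun x => ENNReal.ofReal (c * f1 x) *
      A.indicator (fun _ => (1:ℝ≥0∞)) (τ1 x)) from ((hm1.const_mul c).ennreal_ofReal).mul hg1),
    haux τ1 hτ1 _, haux τ2 hτ2 _,
    hsmul c hc0.le f1 hm1 _ (hτ1 hA), hsmul (1-c) hc1' f2 hm2 _ (hτ2 hA),
    hinv1 A hA, hinv2 A hA]
  -- now show densMeasure f A = c • densMeasure f1 A + (1-c) • densMeasure f2 A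
  rw [← hsmul c hc0.le f1 hm1 A hA, ← hsmul (1-c) hc1' f2 hm2 A hA]
  rw [densMeasure, densMeasure, densMeasure, withDensity_apply _ hA,
    withDensity_apply _ hA, withDensity_apply _ hA,
    ← lintegral_add_left ((hm1.const_mul c).ennreal_ofReal)]
  exact lintegral_congr fun x =>
    ENNReal.ofReal_add (mul_nonneg hc0.le (hn1 x)) (mul_nonneg hc1' (hn2 x))
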